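/- Let r ≥ 1 and let (h_{ij})_{1≤i,j≤r} be a matrix of nonnegative integers. Set n = Σ_{i,j} h_{ij}, let m_j = Σ_{i=1}^r h_{ij} be the j-th column sum and m'_i = Σ_{j=1}^r h_{ij} the i-th row sum. Let Λ = (λ^{(1)},…,λ^{(r)}) be an r-partition with |λ^{(j)}| = m_j for all j, and M = (μ^{(1)},…,μ^{(r)}) an r-partition with |μ^{(i)}| = m'_i for all i. Define A = Σ_{1≤i,j≤r} [j−i−1]·h_{ij}, where [s] denotes the unique integer in {0,…,r−1} congruent to s modulo r, and define B = C(n,2) − n(Λ) − n(M) + Σ_{i=1}^{r−1} Σ_{k=1}^{i} h_{ik}. Then N* − a(Λ) − a(τ(M)) + A = r·B. -/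

import Mathlib

open Finset

/-- Lemma 5.9 of the paper.  Partitions are encoded as finitely supported functions
`p : ℕ →₀ ℕ` with `p j` the `j`-th part (`j ≥ 1`), `p 0 = 0`, weakly decreasing on
positive indices.  `np` is the `n`-function `n(λ) = Σ_{j≥1} (j−1) λ_j`, `size` is `|λ|`,
and `a` is the `a`-function `a(Λ) = r·n(Λ) + Σ_{i=1}^r (i−1)|λ^{(i)}|` of an `r`-tuple. -/
theorem stmt_0 (r : ℕ) (hr : 1 ≤ r) (h : ℕ → ℕ → ℕ)
    (Λ M : ℕ → (ℕ →₀ ℕ))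
    (hΛpart : ∀ i ∈ Icc 1 r, (Λ i) 0 = 0 ∧ ∀ j k : ℕ, 1 ≤ j → j ≤ k → (Λ i) k ≤ (Λ i) j)
    (hMpart : ∀ i ∈ Icc 1 r, (M i) 0 = 0 ∧ ∀ j k : ℕ, 1 ≤ j → j ≤ k → (M i) k ≤ (M i) j)
    (hΛsize : ∀ j ∈ Icc 1 r, ((Λ j).sum fun _ v => v) = ∑ i ∈ Icc 1 r, h i j)
    (hMsize : ∀ i ∈ Icc 1 r, ((M i).sum fun _ v => v) = ∑ j ∈ Icc 1 r, h i j)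
    (n : ℕ) (hn : n = ∑ i ∈ Icc 1 r, ∑ j ∈ Icc 1 r, h i j)
    (np : (ℕ →₀ ℕ) → ℤ) (hnp : ∀ p, np p = p.sum fun j v => ((j : ℤ) - 1) * (v : ℤ))
    (size : (ℕ →₀ ℕ) → ℤ) (hsize : ∀ p, size p = p.sum fun _ v => (v : ℤ))
    (a : (ℕ → (ℕ →₀ ℕ)) → ℤ)
    (ha : ∀ L, a L = (r : ℤ) * (∑ i ∈ Icc 1 r, np (L i))
        + ∑ i ∈ Icc 1 r, ((i : ℤ) - 1) * size (L i))
    (τM : ℕ → (ℕ →₀ ℕ)) (hτM : ∀ i, τM i = if i = r then M r else M (r - i))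
    (A : ℤ) (hA : A = ∑ i ∈ Icc 1 r, ∑ j ∈ Icc 1 r,
        (((j : ℤ) - (i : ℤ) - 1) % (r : ℤ)) * (h i j : ℤ))
    (B : ℤ) (hB : B = (n.choose 2 : ℤ) - (∑ i ∈ Icc 1 r, np (Λ i))
        - (∑ i ∈ Icc 1 r, np (M i))
        + ∑ i ∈ Icc 1 (r - 1), ∑ k ∈ Icc 1 i, (h i k : ℤ))
    (Nstar : ℤ) (hN : Nstar = (n.choose 2 : ℤ) * (r : ℤ) + ((r : ℤ) - 1) * (n : ℤ)) :
    Nstar - a Λ - a τM + A = (r : ℤ) * B := by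
  clear hΛpart hMpart hnp
  -- splitting off the top term of a sum over `Icc 1 r`
  have hsplit : ∀ (f : ℕ → ℤ), ∑ i ∈ Icc 1 r, f i = (∑ i ∈ Icc 1 (r-1), f i) + f r := by
    intro f
    have h1 := Finset.sum_Icc_succ_top (a := 1) (b := r - 1) (by omega) f
    rw [show r - 1 + 1 = r from by omega] at h1
    exact h1
  -- reversal of a sum over `Icc 1 (r-1)`
  have hrev : ∀ (g : ℕ → ℤ), ∑ i ∈ Icc 1 (r-1), g (r - i) = ∑ i ∈ Icc 1 (r-1), g i := by
    intro g
    apply Finset.sum_nbij' (i := fun k => r - k) (j := fun k => r - k)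
    · intro a ha; simp only [mem_Icc] at *; omega
    · intro a ha; simp only [mem_Icc] at *; omega
    · intro a ha; simp only [mem_Icc] at *; omega
    · intro a ha; simp only [mem_Icc] at *; omega
    · intro a ha; rfl
  -- size computations
  have L1 : ∀ j ∈ Icc 1 r, size (Λ j) = ∑ i ∈ Icc 1 r, (h i j : ℤ) := by
    intro j hj
    have : size (Λ j) = (((Λ j).sum fun _ v => v : ℕ) : ℤ) := by
      rw [hsize, Finsupp.sum, Finsupp.sum, Nat.cast_sum]
    rw [this, hΛsize j hj, Nat.cast_sum]
  have L2 : ∀ i ∈ Icc 1 r, size (M i) = ∑ j ∈ Icc 1 r, (h i j : ℤ) := by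
    intro i hi
    have : size (M i) = (((M i).sum fun _ v => v : ℕ) : ℤ) := by
      rw [hsize, Finsupp.sum, Finsupp.sum, Nat.cast_sum]
    rw [this, hMsize i hi, Nat.cast_sum]
  -- e1 : the weighted-size sum for Λ
  have e1 : ∑ i ∈ Icc 1 r, ((i : ℤ) - 1) * size (Λ i)
      = ∑ i ∈ Icc 1 r, ∑ j ∈ Icc 1 r, ((j : ℤ) - 1) * (h i j : ℤ) := by
    rw [Finset.sum_comm]
    refine Finset.sum_congr rfl fun j hj => ?_
    rw [L1 j hj, Finset.mul_sum]
  -- e3 : the np-sum for τM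
  have e3 : ∑ i ∈ Icc 1 r, np (τM i) = ∑ i ∈ Icc 1 r, np (M i) := by
    rw [hsplit (fun i => np (τM i)), hsplit (fun i => np (M i))]
    have h1 : ∑ i ∈ Icc 1 (r-1), np (τM i) = ∑ i ∈ Icc 1 (r-1), np (M (r - i)) := by
      refine Finset.sum_congr rfl fun i hi => ?_
      simp only [mem_Icc] at hi
      rw [hτM i, if_neg (by omega)]
    rw [h1, hrev (fun k => np (M k)), hτM r, if_pos rfl]
  -- e2 : the weighted-size sum for τM
  have e2 : ∑ i ∈ Icc 1 r, ((i : ℤ) - 1) * size (τM i)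
      = (∑ i ∈ Icc 1 r, ∑ j ∈ Icc 1 r, ((r : ℤ) - (i : ℤ) - 1) * (h i j : ℤ))
        + (r : ℤ) * ∑ j ∈ Icc 1 r, (h r j : ℤ) := by
    rw [hsplit (fun i => ((i : ℤ) - 1) * size (τM i))]
    have h1 : ∑ i ∈ Icc 1 (r-1), ((i : ℤ) - 1) * size (τM i)
        = ∑ k ∈ Icc 1 (r-1), ((r : ℤ) - (k : ℤ) - 1) * size (M k) := by
      rw [← hrev (fun k => ((r : ℤ) - (k : ℤ) - 1) * size (M k))]
      refine Finset.sum_congr rfl fun i hi => ?_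
      simp only [mem_Icc] at hi
      rw [hτM i, if_neg (by omega)]
      have : ((r - i : ℕ) : ℤ) = (r : ℤ) - (i : ℤ) := by omega
      rw [this]; ring
    have h2 : ∑ k ∈ Icc 1 r, ((r : ℤ) - (k : ℤ) - 1) * size (M k)
        = (∑ k ∈ Icc 1 (r-1), ((r : ℤ) - (k : ℤ) - 1) * size (M k))
          + ((r : ℤ) - (r : ℤ) - 1) * size (M r) :=
      hsplit (fun k => ((r : ℤ) - (k : ℤ) - 1) * size (M k))
    have h3 : ∑ k ∈ Icc 1 r, ((r : ℤ) - (k : ℤ) - 1) * size (M k)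
        = ∑ i ∈ Icc 1 r, ∑ j ∈ Icc 1 r, ((r : ℤ) - (i : ℤ) - 1) * (h i j : ℤ) := by
      refine Finset.sum_congr rfl fun k hk => ?_
      rw [L2 k hk, Finset.mul_sum]
    have hMr : size (M r) = ∑ j ∈ Icc 1 r, (h r j : ℤ) := L2 r (by simp [mem_Icc]; omega)
    rw [hτM r, if_pos rfl, h1, ← h3, h2, hMr]
    ring
  -- the emod computation
  have hA' : A = (∑ i ∈ Icc 1 r, ∑ j ∈ Icc 1 r, ((j : ℤ) - (i : ℤ) - 1) * (h i j : ℤ))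
      + (r : ℤ) * ((∑ i ∈ Icc 1 (r - 1), ∑ k ∈ Icc 1 i, (h i k : ℤ))
        + ∑ j ∈ Icc 1 r, (h r j : ℤ)) := by
    have step1 : A = ∑ i ∈ Icc 1 r, ∑ j ∈ Icc 1 r,
        (((j : ℤ) - (i : ℤ) - 1) + (if j ≤ i then (r : ℤ) else 0)) * (h i j : ℤ) := by
      rw [hA]
      refine Finset.sum_congr rfl fun i hi => Finset.sum_congr rfl fun j hj => ?_
      simp only [mem_Icc] at hi hj
      congr 1
      by_cases hji : j ≤ i
      · rw [if_pos hji]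
        have hme := Int.add_mul_emod_self_left (a := (j : ℤ) - (i : ℤ) - 1) (b := (r : ℤ)) (c := 1)
        rw [mul_one] at hme
        rw [← hme, Int.emod_eq_of_lt (by omega) (by omega)]
      · rw [if_neg hji, Int.emod_eq_of_lt (by omega) (by omega)]; ring
    have step2 : ∀ i ∈ Icc 1 r, ∑ j ∈ Icc 1 r, (if j ≤ i then (r : ℤ) else 0) * (h i j : ℤ)
        = (r : ℤ) * ∑ j ∈ Icc 1 i, (h i j : ℤ) := by
      intro i hi
      simp only [mem_Icc] at hi
      rw [Finset.mul_sum]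
      rw [show (Icc 1 i) = (Icc 1 r).filter (fun j => j ≤ i) from by
        ext x; simp only [mem_Icc, mem_filter]; omega]
      rw [Finset.sum_filter]
      refine Finset.sum_congr rfl fun j _ => ?_
      by_cases hji : j ≤ i <;> simp [hji]
    have step3 : ∑ i ∈ Icc 1 r, (r : ℤ) * ∑ j ∈ Icc 1 i, (h i j : ℤ)
        = (r : ℤ) * ((∑ i ∈ Icc 1 (r - 1), ∑ k ∈ Icc 1 i, (h i k : ℤ))
          + ∑ j ∈ Icc 1 r, (h r j : ℤ)) := by
      rw [← Finset.mul_sum, hsplit (fun i => ∑ j ∈ Icc 1 i, (h i j : ℤ))]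
    calc A = ∑ i ∈ Icc 1 r, ∑ j ∈ Icc 1 r,
          (((j : ℤ) - (i : ℤ) - 1) * (h i j : ℤ)
            + (if j ≤ i then (r : ℤ) else 0) * (h i j : ℤ)) := by
          rw [step1]
          exact Finset.sum_congr rfl fun i _ => Finset.sum_congr rfl fun j _ => by ring
      _ = (∑ i ∈ Icc 1 r, ∑ j ∈ Icc 1 r, ((j : ℤ) - (i : ℤ) - 1) * (h i j : ℤ))
          + ∑ i ∈ Icc 1 r, ∑ j ∈ Icc 1 r, (if j ≤ i then (r : ℤ) else 0) * (h i j : ℤ) := by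
          rw [← Finset.sum_add_distrib]
          exact Finset.sum_congr rfl fun i _ => Finset.sum_add_distrib
      _ = _ := by
          rw [Finset.sum_congr rfl step2, step3]
  -- cast of n
  have hncast : (n : ℤ) = ∑ i ∈ Icc 1 r, ∑ j ∈ Icc 1 r, (h i j : ℤ) := by
    rw [hn]; push_cast; rfl
  -- the cancellation identity
  have ecancel : ((r : ℤ) - 1) * (∑ i ∈ Icc 1 r, ∑ j ∈ Icc 1 r, (h i j : ℤ))
      - (∑ i ∈ Icc 1 r, ∑ j ∈ Icc 1 r, ((j : ℤ) - 1) * (h i j : ℤ))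
      - (∑ i ∈ Icc 1 r, ∑ j ∈ Icc 1 r, ((r : ℤ) - (i : ℤ) - 1) * (h i j : ℤ))
      + (∑ i ∈ Icc 1 r, ∑ j ∈ Icc 1 r, ((j : ℤ) - (i : ℤ) - 1) * (h i j : ℤ)) = 0 := by
    have : ∑ i ∈ Icc 1 r, ∑ j ∈ Icc 1 r,
        (((r : ℤ) - 1) * (h i j : ℤ) - ((j : ℤ) - 1) * (h i j : ℤ)
          - ((r : ℤ) - (i : ℤ) - 1) * (h i j : ℤ)
          + ((j : ℤ) - (i : ℤ) - 1) * (h i j : ℤ)) = 0 :=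
      Finset.sum_eq_zero fun i _ => Finset.sum_eq_zero fun j _ => by ring
    simp only [Finset.sum_add_distrib, Finset.sum_sub_distrib] at this
    rw [Finset.mul_sum]
    simp only [Finset.mul_sum] at this ⊢
    linarith [this]
  rw [hN, ha Λ, ha τM, e1, e2, e3, hA', hB, hncast]
  linear_combination ecancel
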